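/- Let (M,d,ℓ) be a causally curve-connected, K-globally hyperbolic metric spacetime. Then each compact subset X ⊂ M admits a uniform bound C on the metric length L_d(σ) of every (possibly discontinuous) causal path σ : [0,1] → X. -/

import Mathlib

open Set
open scoped ENNReal

/-- The metric length of a path `σ` over `[a,b]`: the supremum over finite
partitions of `Σᵢ d(σ(sᵢ₋₁), σ(sᵢ))` (valued in `ℝ≥0∞`). -/
noncomputable def MetLen {M : Type*} [MetricSpace M] (σ : ℝ → M) (a b : ℝ) : ℝ≥0∞ :=
  sSup {v : ℝ≥0∞ | ∃ (N : ℕ) (s : ℕ → ℝ), s 0 = a ∧ s N = b ∧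
    (∀ i < N, s i < s (i + 1)) ∧
    v = ∑ i ∈ Finset.range N, edist (σ (s i)) (σ (s (i + 1)))}

/-- A (rough, future-directed) causal path on `[0,1]`: no continuity assumed. -/
def IsCausalPath {M : Type*} (ℓ : M → M → EReal) (σ : ℝ → M) : Prop :=
  ∀ s t : ℝ, 0 ≤ s → s < t → t ≤ 1 → ℓ (σ s) (σ t) ≤ 0

/-- A causal curve on `[0,1]`: a nonconstant causal path which is locally
Lipschitz with respect to the metric. -/
def IsCausalCurve {M : Type*} [MetricSpace M] (ℓ : M → M → EReal) (σ : ℝ → M) : Prop :=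
  IsCausalPath ℓ σ ∧
  (∀ t ∈ Icc (0:ℝ) 1, ∃ (K : NNReal) (U : Set ℝ), U ∈ nhdsWithin t (Icc (0:ℝ) 1) ∧
    LipschitzOnWith K σ U) ∧
  (∃ s ∈ Icc (0:ℝ) 1, ∃ t ∈ Icc (0:ℝ) 1, σ s ≠ σ t)

section Stmt10Aux

set_option linter.unusedSectionVars false

variable {M : Type*} [MetricSpace M]

/-- Locally Lipschitz on `[0,1]`. -/
def Stmt10.LocLip (σ : ℝ → M) : Prop :=
  ∀ t ∈ Icc (0:ℝ) 1, ∃ (K : NNReal) (U : Set ℝ), U ∈ nhdsWithin t (Icc (0:ℝ) 1) ∧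
    LipschitzOnWith K σ U

namespace Stmt10

/-- Concatenation of two paths parameterized on `[0,1]`. -/
noncomputable def pconcat (f g : ℝ → M) : ℝ → M :=
  fun t => if t ≤ 1/2 then f (2*t) else g (2*t - 1)

lemma pconcat_left (f g : ℝ → M) {t : ℝ} (h : t ≤ 1/2) : pconcat f g t = f (2*t) :=
  if_pos h

lemma pconcat_right (f g : ℝ → M) (hfg : f 1 = g 0) {t : ℝ} (h : 1/2 ≤ t) :
    pconcat f g t = g (2*t - 1) := by
  rcases eq_or_lt_of_le h with h' | h'
  · rw [pconcat, ← h']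
    norm_num
    exact hfg
  · rw [pconcat, if_neg (not_le.2 h')]

lemma pconcat_zero (f g : ℝ → M) : pconcat f g 0 = f 0 := by
  rw [pconcat_left f g (by norm_num)]; norm_num

lemma pconcat_one (f g : ℝ → M) (hfg : f 1 = g 0) : pconcat f g 1 = g 1 := by
  rw [pconcat_right f g hfg (by norm_num)]; norm_num

lemma mem_of_mem_nhdsWithin' {t : ℝ} {U : Set ℝ} (ht : t ∈ Icc (0:ℝ) 1)
    (h : U ∈ nhdsWithin t (Icc (0:ℝ) 1)) : t ∈ U := by
  rcases mem_nhdsWithin.1 h with ⟨V, hVo, htV, hsub⟩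
  exact hsub ⟨htV, ht⟩

lemma lipschitzWith_affine (d : ℝ) : LipschitzWith 2 (fun t : ℝ => 2*t - d) := by
  apply LipschitzWith.of_dist_le_mul
  intro x y
  rw [Real.dist_eq, Real.dist_eq]
  have h : (2*x - d) - (2*y - d) = 2*(x - y) := by ring
  rw [h, abs_mul]
  simp

lemma lipOn_congr {f g : ℝ → M} {K : NNReal} {S : Set ℝ}
    (h : LipschitzOnWith K f S) (he : EqOn f g S) : LipschitzOnWith K g S := by
  intro a ha b hb
  rw [← he ha, ← he hb]
  exact h ha hb

/-- Gluing two Lipschitz pieces at a common point. -/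
lemma lip_glue {f : ℝ → M} {K₁ K₂ : NNReal} {S T : Set ℝ} {c : ℝ}
    (hS : ∀ x ∈ S, x ≤ c) (hT : ∀ x ∈ T, c ≤ x) (hcS : c ∈ S) (hcT : c ∈ T)
    (h1 : LipschitzOnWith K₁ f S) (h2 : LipschitzOnWith K₂ f T) :
    LipschitzOnWith (max K₁ K₂) f (S ∪ T) := by
  have key : ∀ x ∈ S, ∀ y ∈ T, edist (f x) (f y) ≤ (max K₁ K₂ : ℝ≥0∞) * edist x y := by
    intro x hx y hy
    have hxc : x ≤ c := hS x hx
    have hcy : c ≤ y := hT y hy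
    have e1 : edist (f x) (f y) ≤ edist (f x) (f c) + edist (f c) (f y) := edist_triangle _ _ _
    have e2 : edist (f x) (f c) ≤ (K₁ : ℝ≥0∞) * edist x c := h1 hx hcS
    have e3 : edist (f c) (f y) ≤ (K₂ : ℝ≥0∞) * edist c y := h2 hcT hy
    have hsum : edist x c + edist c y = edist x y := by
      rw [edist_dist, edist_dist, edist_dist, Real.dist_eq, Real.dist_eq, Real.dist_eq,
        abs_of_nonpos (by linarith : x - c ≤ 0), abs_of_nonpos (by linarith : c - y ≤ 0),
        abs_of_nonpos (by linarith : x - y ≤ 0),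
        ← ENNReal.ofReal_add (by linarith) (by linarith)]
      congr 1; ring
    calc edist (f x) (f y) ≤ (K₁ : ℝ≥0∞) * edist x c + (K₂ : ℝ≥0∞) * edist c y :=
          e1.trans (add_le_add e2 e3)
      _ ≤ (max K₁ K₂ : ℝ≥0∞) * edist x c + (max K₁ K₂ : ℝ≥0∞) * edist c y := by
          gcongr <;> [exact_mod_cast le_max_left K₁ K₂; exact_mod_cast le_max_right K₁ K₂]
      _ = (max K₁ K₂ : ℝ≥0∞) * (edist x c + edist c y) := (mul_add _ _ _).symm
      _ = (max K₁ K₂ : ℝ≥0∞) * edist x y := by rw [hsum]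
  intro x hx y hy
  rcases hx with hx | hx <;> rcases hy with hy | hy
  · exact (h1 hx hy).trans (by gcongr; exact_mod_cast le_max_left K₁ K₂)
  · exact key x hx y hy
  · rw [edist_comm x y, edist_comm (f x) (f y)]; exact key y hy x hx
  · exact (h2 hx hy).trans (by gcongr; exact_mod_cast le_max_right K₁ K₂)

lemma lip_left_piece {f g : ℝ → M} {K : NNReal} {U : Set ℝ} (hU : LipschitzOnWith K f U) :
    LipschitzOnWith (K * 2) (pconcat f g) ((fun s : ℝ => 2*s - 0) ⁻¹' U ∩ Iic (1/2)) := by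
  have hcomp : LipschitzOnWith (K * 2) (f ∘ (fun s : ℝ => 2*s - 0))
      ((fun s : ℝ => 2*s - 0) ⁻¹' U) :=
    hU.comp ((lipschitzWith_affine 0).lipschitzOnWith) (mapsTo_preimage _ _)
  refine lipOn_congr (hcomp.mono inter_subset_left) ?_
  rintro a ⟨-, ha2⟩
  show f (2*a - 0) = pconcat f g a
  rw [pconcat_left f g ha2]
  norm_num

lemma lip_right_piece {f g : ℝ → M} (hfg : f 1 = g 0) {K : NNReal} {U : Set ℝ}
    (hU : LipschitzOnWith K g U) :
    LipschitzOnWith (K * 2) (pconcat f g) ((fun s : ℝ => 2*s - 1) ⁻¹' U ∩ Ici (1/2)) := by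
  have hcomp : LipschitzOnWith (K * 2) (g ∘ (fun s : ℝ => 2*s - 1))
      ((fun s : ℝ => 2*s - 1) ⁻¹' U) :=
    hU.comp ((lipschitzWith_affine 1).lipschitzOnWith) (mapsTo_preimage _ _)
  refine lipOn_congr (hcomp.mono inter_subset_left) ?_
  rintro a ⟨-, ha2⟩
  exact (pconcat_right f g hfg ha2).symm

lemma locLip_pconcat {f g : ℝ → M} (hf : LocLip f) (hg : LocLip g) (hfg : f 1 = g 0) :
    LocLip (pconcat f g) := by
  intro t ht
  rcases lt_trichotomy t (1/2) with hlt | heq | hgt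
  · -- left region
    obtain ⟨K, U, hUmem, hUlip⟩ := hf (2*t) ⟨by linarith [ht.1], by linarith⟩
    rcases mem_nhdsWithin.1 hUmem with ⟨V, hVo, hV2t, hVsub⟩
    refine ⟨K * 2, (fun s : ℝ => 2*s - 0) ⁻¹' U ∩ Iic (1/2), ?_, lip_left_piece hUlip⟩
    refine mem_nhdsWithin.2 ⟨(fun s : ℝ => 2*s - 0) ⁻¹' V ∩ Iio (1/2), ?_, ?_, ?_⟩
    · exact ((lipschitzWith_affine 0).continuous.isOpen_preimage V hVo).inter isOpen_Iio
    · refine ⟨?_, hlt⟩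
      have harg : 2*t - 0 = 2*t := by ring
      rw [mem_preimage, harg]
      exact hV2t
    · rintro a ⟨⟨haV, haI⟩, ha01⟩
      have haI' : a < 1/2 := haI
      have h2a : 2*a - 0 ∈ Icc (0:ℝ) 1 := ⟨by linarith [ha01.1], by linarith⟩
      exact ⟨hVsub ⟨haV, h2a⟩, haI'.le⟩
  · -- junction t = 1/2
    subst heq
    obtain ⟨K₁, U₁, hU₁mem, hU₁lip⟩ := hf 1 ⟨zero_le_one, le_rfl⟩
    obtain ⟨K₂, U₂, hU₂mem, hU₂lip⟩ := hg 0 ⟨le_rfl, zero_le_one⟩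
    rcases mem_nhdsWithin.1 hU₁mem with ⟨V₁, hV₁o, hV₁, hV₁sub⟩
    rcases mem_nhdsWithin.1 hU₂mem with ⟨V₂, hV₂o, hV₂, hV₂sub⟩
    have h1U : (1:ℝ) ∈ U₁ := mem_of_mem_nhdsWithin' ⟨zero_le_one, le_rfl⟩ hU₁mem
    have h0U : (0:ℝ) ∈ U₂ := mem_of_mem_nhdsWithin' ⟨le_rfl, zero_le_one⟩ hU₂mem
    set SL := (fun s : ℝ => 2*s - 0) ⁻¹' U₁ ∩ Iic (1/2) with hSL
    set SR := (fun s : ℝ => 2*s - 1) ⁻¹' U₂ ∩ Ici (1/2) with hSR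
    have hcSL : (1/2 : ℝ) ∈ SL := by
      constructor
      · have harg : 2*(1/2:ℝ) - 0 = 1 := by norm_num
        rw [mem_preimage, harg]
        exact h1U
      · exact mem_Iic.2 le_rfl
    have hcSR : (1/2 : ℝ) ∈ SR := by
      constructor
      · have harg : 2*(1/2:ℝ) - 1 = 0 := by norm_num
        rw [mem_preimage, harg]
        exact h0U
      · exact mem_Ici.2 le_rfl
    have hglue := lip_glue (fun a ha => ha.2) (fun a ha => ha.2) hcSL hcSR
      (lip_left_piece (g := g) hU₁lip) (lip_right_piece hfg hU₂lip)
    refine ⟨max (K₁ * 2) (K₂ * 2), SL ∪ SR, ?_, hglue⟩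
    refine mem_nhdsWithin.2
      ⟨(fun s : ℝ => 2*s - 0) ⁻¹' V₁ ∩ (fun s : ℝ => 2*s - 1) ⁻¹' V₂, ?_, ?_, ?_⟩
    · exact ((lipschitzWith_affine 0).continuous.isOpen_preimage V₁ hV₁o).inter
        ((lipschitzWith_affine 1).continuous.isOpen_preimage V₂ hV₂o)
    · constructor
      · have harg : 2*(1/2:ℝ) - 0 = 1 := by norm_num
        rw [mem_preimage, harg]
        exact hV₁
      · have harg : 2*(1/2:ℝ) - 1 = 0 := by norm_num
        rw [mem_preimage, harg]
        exact hV₂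
    · rintro a ⟨⟨haV₁, haV₂⟩, ha01⟩
      by_cases hha : a ≤ 1/2
      · left
        have h2a : 2*a - 0 ∈ Icc (0:ℝ) 1 := ⟨by linarith [ha01.1], by linarith⟩
        exact ⟨hV₁sub ⟨haV₁, h2a⟩, hha⟩
      · right
        push_neg at hha
        have h2a : 2*a - 1 ∈ Icc (0:ℝ) 1 := ⟨by linarith, by linarith [ha01.2]⟩
        exact ⟨hV₂sub ⟨haV₂, h2a⟩, hha.le⟩
  · -- right region
    obtain ⟨K, U, hUmem, hUlip⟩ := hg (2*t - 1) ⟨by linarith, by linarith [ht.2]⟩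
    rcases mem_nhdsWithin.1 hUmem with ⟨V, hVo, hVt, hVsub⟩
    refine ⟨K * 2, (fun s : ℝ => 2*s - 1) ⁻¹' U ∩ Ici (1/2), ?_, lip_right_piece hfg hUlip⟩
    refine mem_nhdsWithin.2 ⟨(fun s : ℝ => 2*s - 1) ⁻¹' V ∩ Ioi (1/2), ?_, ?_, ?_⟩
    · exact ((lipschitzWith_affine 1).continuous.isOpen_preimage V hVo).inter isOpen_Ioi
    · exact ⟨hVt, hgt⟩
    · rintro a ⟨⟨haV, haI⟩, ha01⟩
      have haI' : (1/2 : ℝ) < a := haI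
      have h2a : 2*a - 1 ∈ Icc (0:ℝ) 1 := ⟨by linarith, by linarith [ha01.2]⟩
      exact ⟨hVsub ⟨haV, h2a⟩, haI'.le⟩

lemma causal_pconcat (ℓ : M → M → EReal) (hrefl : ∀ x, ℓ x x ≤ 0)
    (htrans : ∀ x y z : M, ℓ x y ≤ 0 → ℓ y z ≤ 0 → ℓ x z ≤ 0)
    {f g : ℝ → M} (hfp : IsCausalPath ℓ f) (hgp : IsCausalPath ℓ g) (hfg : f 1 = g 0) :
    IsCausalPath ℓ (pconcat f g) := by
  intro s t hs hst ht
  by_cases h1 : t ≤ 1/2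
  · rw [pconcat_left f g (le_trans hst.le h1), pconcat_left f g h1]
    exact hfp (2*s) (2*t) (by linarith) (by linarith) (by linarith)
  · push_neg at h1
    by_cases h2 : s ≤ 1/2
    · rw [pconcat_left f g h2, pconcat_right f g hfg h1.le]
      have e1 : ℓ (f (2*s)) (f 1) ≤ 0 := by
        rcases lt_or_eq_of_le (show 2*s ≤ 1 by linarith) with h | h
        · exact hfp (2*s) 1 (by linarith) h le_rfl
        · rw [h]; exact hrefl _
      have e2 : ℓ (f 1) (g (2*t - 1)) ≤ 0 := by
        rw [hfg]
        exact hgp 0 (2*t - 1) le_rfl (by linarith) (by linarith)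
      exact htrans _ _ _ e1 e2
    · push_neg at h2
      rw [pconcat_right f g hfg h2.le, pconcat_right f g hfg h1.le]
      exact hgp (2*s - 1) (2*t - 1) (by linarith) (by linarith) (by linarith)

lemma part_mono {s : ℕ → ℝ} {K : ℕ} (hs : ∀ i < K, s i < s (i+1)) :
    ∀ j ≤ K, ∀ i ≤ j, s i ≤ s j := by
  intro j
  induction j with
  | zero =>
    intro _ i hi
    have h0 : i = 0 := Nat.le_zero.1 hi
    rw [h0]
  | succ n ih =>
    intro hn i hi
    rcases Nat.lt_or_ge i (n+1) with h | h
    · exact le_trans (ih (by omega) i (by omega)) (hs n (by omega)).le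
    · have : i = n + 1 := by omega
      rw [this]

/-- The key induction: chains of causally related points can be joined by a single
path which is causal, locally Lipschitz, and admits a partition realizing the sum
of pairwise distances. -/
lemma chain_curve (ℓ : M → M → EReal) (hrefl : ∀ x, ℓ x x ≤ 0)
    (htrans : ∀ x y z : M, ℓ x y ≤ 0 → ℓ y z ≤ 0 → ℓ x z ≤ 0)
    (hccc : ∀ x y : M, ℓ x y ≤ 0 → x ≠ y →
      ∃ σ : ℝ → M, (IsCausalPath ℓ σ ∧ LocLip σ) ∧ σ 0 = x ∧ σ 1 = y)
    (x : ℕ → M) :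
    ∀ N : ℕ, (∀ i < N, ℓ (x i) (x (i+1)) ≤ 0) →
      ∃ τ : ℝ → M, IsCausalPath ℓ τ ∧ LocLip τ ∧ τ 0 = x 0 ∧ τ 1 = x N ∧
        ∃ (K : ℕ) (s : ℕ → ℝ), s 0 = 0 ∧ s K = 1 ∧ (∀ i < K, s i < s (i+1)) ∧
          ∑ i ∈ Finset.range N, edist (x i) (x (i+1)) =
            ∑ i ∈ Finset.range K, edist (τ (s i)) (τ (s (i+1))) := by
  intro N
  induction N with
  | zero =>
    intro _
    refine ⟨fun _ => x 0, fun _ _ _ _ _ => hrefl _, ?_, rfl, rfl,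
      1, fun i => (i : ℝ), by norm_num, by norm_num, ?_, by simp⟩
    · intro t ht
      exact ⟨0, univ, Filter.univ_mem, (LipschitzWith.const (x 0)).lipschitzOnWith⟩
    · intro i hi
      have : i = 0 := by omega
      subst this
      norm_num
  | succ n ih =>
    intro hN
    obtain ⟨f, hfp, hfl, hf0, hf1, Kp, sp, hsp0, hspK, hspinc, hsum⟩ :=
      ih (fun i hi => hN i (by omega))
    have hℓn : ℓ (x n) (x (n+1)) ≤ 0 := hN n (by omega)
    obtain ⟨g, ⟨hgp, hgl⟩, hg0, hg1⟩ :
        ∃ g : ℝ → M, (IsCausalPath ℓ g ∧ LocLip g) ∧ g 0 = x n ∧ g 1 = x (n+1) := by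
      by_cases hxy : x n = x (n+1)
      · exact ⟨fun _ => x n, ⟨fun _ _ _ _ _ => hrefl _,
          fun t ht => ⟨0, univ, Filter.univ_mem, (LipschitzWith.const (x n)).lipschitzOnWith⟩⟩,
          rfl, hxy⟩
      · exact hccc _ _ hℓn hxy
    have hfg : f 1 = g 0 := by rw [hf1, hg0]
    have hsple : ∀ i ≤ Kp, sp i ≤ 1 := by
      intro i hi
      rw [← hspK]
      exact part_mono hspinc Kp le_rfl i hi
    refine ⟨pconcat f g, causal_pconcat ℓ hrefl htrans hfp hgp hfg,
      locLip_pconcat hfl hgl hfg, by rw [pconcat_zero, hf0],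
      by rw [pconcat_one f g hfg, hg1],
      Kp + 1, fun i => if i ≤ Kp then sp i / 2 else 1, by simp [hsp0], by simp, ?_, ?_⟩
    · intro i hi
      show (if i ≤ Kp then sp i / 2 else 1) < if i + 1 ≤ Kp then sp (i + 1) / 2 else 1
      rcases Nat.lt_or_ge i Kp with h | h
      · rw [if_pos h.le, if_pos (by omega : i + 1 ≤ Kp)]
        linarith [hspinc i h]
      · have hik : i = Kp := by omega
        subst hik
        rw [if_pos le_rfl, if_neg (by omega), hspK]
        norm_num
    · rw [Finset.sum_range_succ, Finset.sum_range_succ, hsum]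
      congr 1
      · apply Finset.sum_congr rfl
        intro i hi
        have hiKp : i < Kp := Finset.mem_range.1 hi
        show edist (f (sp i)) (f (sp (i+1))) = edist (pconcat f g (if i ≤ Kp then sp i / 2 else 1))
            (pconcat f g (if i + 1 ≤ Kp then sp (i + 1) / 2 else 1))
        rw [if_pos hiKp.le, if_pos (by omega : i + 1 ≤ Kp)]
        have e1 : pconcat f g (sp i / 2) = f (sp i) := by
          rw [pconcat_left f g (by linarith [hsple i hiKp.le])]
          congr 1; ring
        have e2 : pconcat f g (sp (i+1) / 2) = f (sp (i+1)) := by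
          rw [pconcat_left f g (by linarith [hsple (i+1) hiKp])]
          congr 1; ring
        rw [e1, e2]
      · show edist (x n) (x (n+1)) = edist (pconcat f g (if Kp ≤ Kp then sp Kp / 2 else 1))
            (pconcat f g (if Kp + 1 ≤ Kp then sp (Kp + 1) / 2 else 1))
        rw [if_pos le_rfl, if_neg (by omega), hspK]
        have e1 : pconcat f g ((1:ℝ) / 2) = x n := by
          rw [pconcat_left f g (by norm_num)]
          have : 2 * ((1:ℝ)/2) = 1 := by norm_num
          rw [this, hf1]
        have e2 : pconcat f g 1 = x (n+1) := by
          rw [pconcat_one f g hfg, hg1]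
        rw [e1, e2]

end Stmt10

end Stmt10Aux

/-- in a causally curve-connected, K-globally hyperbolic metric
spacetime, each compact set X admits a uniform bound on the d-length of all
(possibly discontinuous) causal paths with values in X. -/
theorem stmt10 {M : Type*} [MetricSpace M] (ℓ : M → M → EReal)
    (hrange : ∀ x y, ℓ x y ≤ 0 ∨ ℓ x y = ⊤)
    (hrefl : ∀ x, ℓ x x ≤ 0)
    (htri : ∀ x y z, ℓ x y < ⊤ → ℓ y z < ⊤ → ℓ x z ≤ ℓ x y + ℓ y z)
    -- causally curve-connected:
    (hccc : ∀ x y : M, ℓ x y ≤ 0 → x ≠ y →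
      ∃ σ : ℝ → M, IsCausalCurve ℓ σ ∧ σ 0 = x ∧ σ 1 = y)
    -- non-totally imprisoning:
    (hnti : ∀ K : Set M, IsCompact K → ∃ C : ℝ≥0∞, C ≠ ⊤ ∧
      ∀ σ : ℝ → M, IsCausalCurve ℓ σ → (∀ t ∈ Icc (0:ℝ) 1, σ t ∈ K) →
        MetLen σ 0 1 ≤ C)
    -- compactness of J(X,Y) = J⁺(X) ∩ J⁻(Y) for compact X, Y:
    (hKgh : ∀ X Y : Set M, IsCompact X → IsCompact Y →
      IsCompact ({z | ∃ x ∈ X, ℓ x z ≤ 0} ∩ {z | ∃ y ∈ Y, ℓ z y ≤ 0}))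
    (X : Set M) (hX : IsCompact X) :
    ∃ C : ℝ≥0∞, C ≠ ⊤ ∧ ∀ σ : ℝ → M, IsCausalPath ℓ σ →
      (∀ t ∈ Icc (0:ℝ) 1, σ t ∈ X) → MetLen σ 0 1 ≤ C := by
  have htrans : ∀ x y z : M, ℓ x y ≤ 0 → ℓ y z ≤ 0 → ℓ x z ≤ 0 := by
    intro x y z hxy hyz
    have h1 : ℓ x y < ⊤ := lt_of_le_of_lt hxy (by norm_num)
    have h2 : ℓ y z < ⊤ := lt_of_le_of_lt hyz (by norm_num)
    calc ℓ x z ≤ ℓ x y + ℓ y z := htri x y z h1 h2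
      _ ≤ 0 + 0 := add_le_add hxy hyz
      _ = 0 := by norm_num
  obtain ⟨C, hCne, hC⟩ := hnti _ (hKgh X X hX hX)
  refine ⟨C, hCne, ?_⟩
  intro σ hσ hσX
  apply sSup_le
  rintro v ⟨N, s, hs0, hsN, hinc, rfl⟩
  have hsle : ∀ i ≤ N, s i ≤ 1 := fun i hi => hsN ▸ Stmt10.part_mono hinc N le_rfl i hi
  have hsge : ∀ i ≤ N, 0 ≤ s i := fun i hi => hs0 ▸ Stmt10.part_mono hinc i hi 0 (Nat.zero_le _)
  set x : ℕ → M := fun i => σ (s (min i N)) with hxdef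
  have hxcons : ∀ i < N, ℓ (x i) (x (i+1)) ≤ 0 := by
    intro i hi
    have h1 : min i N = i := min_eq_left hi.le
    have h2 : min (i+1) N = i + 1 := min_eq_left hi
    simp only [hxdef, h1, h2]
    exact hσ (s i) (s (i+1)) (hsge i hi.le) (hinc i hi) (hsle (i+1) hi)
  have hccc' : ∀ a b : M, ℓ a b ≤ 0 → a ≠ b →
      ∃ τ : ℝ → M, (IsCausalPath ℓ τ ∧ Stmt10.LocLip τ) ∧ τ 0 = a ∧ τ 1 = b := by
    intro a b hab hne
    obtain ⟨τ, hτ, h0, h1⟩ := hccc a b hab hne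
    exact ⟨τ, ⟨hτ.1, hτ.2.1⟩, h0, h1⟩
  obtain ⟨τ, hτp, hτl, hτ0, hτ1, K, u, hu0, huK, huinc, husum⟩ :=
    Stmt10.chain_curve ℓ hrefl htrans hccc' x N hxcons
  have hvsum : ∑ i ∈ Finset.range N, edist (σ (s i)) (σ (s (i+1))) =
      ∑ i ∈ Finset.range N, edist (x i) (x (i+1)) := by
    apply Finset.sum_congr rfl
    intro i hi
    have hiN : i < N := Finset.mem_range.1 hi
    simp only [hxdef, min_eq_left hiN.le, min_eq_left (Nat.succ_le_of_lt hiN)]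
  have hτ0X : τ 0 ∈ X := by
    rw [hτ0]
    simp only [hxdef, Nat.min_def]
    split
    · rw [hs0]; exact hσX 0 ⟨le_rfl, zero_le_one⟩
    · rw [hsN]; exact hσX 1 ⟨zero_le_one, le_rfl⟩
  have hτ1X : τ 1 ∈ X := by
    rw [hτ1]
    simp only [hxdef, min_self, hsN]
    exact hσX 1 ⟨zero_le_one, le_rfl⟩
  have hmaps : ∀ t ∈ Icc (0:ℝ) 1,
      τ t ∈ {z | ∃ x ∈ X, ℓ x z ≤ 0} ∩ {z | ∃ y ∈ X, ℓ z y ≤ 0} := by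
    intro t ht
    constructor
    · refine ⟨τ 0, hτ0X, ?_⟩
      rcases eq_or_lt_of_le ht.1 with h | h
      · rw [← h]; exact hrefl _
      · exact hτp 0 t le_rfl h ht.2
    · refine ⟨τ 1, hτ1X, ?_⟩
      rcases eq_or_lt_of_le ht.2 with h | h
      · rw [h]; exact hrefl _
      · exact hτp t 1 ht.1 h le_rfl
  rw [hvsum, husum]
  by_cases hnc : ∃ a ∈ Icc (0:ℝ) 1, ∃ b ∈ Icc (0:ℝ) 1, τ a ≠ τ b
  · have hcurve : IsCausalCurve ℓ τ := ⟨hτp, hτl, hnc⟩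
    refine le_trans ?_ (hC τ hcurve hmaps)
    apply le_sSup
    exact ⟨K, u, hu0, huK, huinc, rfl⟩
  · push_neg at hnc
    have hule : ∀ i ≤ K, u i ≤ 1 := fun i hi => huK ▸ Stmt10.part_mono huinc K le_rfl i hi
    have huge : ∀ i ≤ K, 0 ≤ u i := fun i hi => hu0 ▸ Stmt10.part_mono huinc i hi 0 (Nat.zero_le _)
    have : ∑ i ∈ Finset.range K, edist (τ (u i)) (τ (u (i+1))) = 0 := by
      apply Finset.sum_eq_zero
      intro i hi
      have hiK : i < K := Finset.mem_range.1 hi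
      have he : τ (u i) = τ (u (i+1)) :=
        hnc (u i) ⟨huge i hiK.le, hule i hiK.le⟩ (u (i+1)) ⟨huge (i+1) hiK, hule (i+1) hiK⟩
      rw [he, edist_self]
    rw [this]
    exact zero_le
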